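/- Let F : ℝ² → ℝ be defined by F(x₁, x₂) = |x₁| − |x₂|, where ℝ² carries the Euclidean norm. Then for every K > 1 there exists r > 0 such that d(x, F⁻¹(y)) ≤ K·|y − F(x)| for all x ∈ ℝ² with ‖x‖ ≤ r and all y ∈ ℝ with |y| ≤ r; in particular, F is metrically regular near the point ((0,0), 0). -/

import Mathlib

open Set Metric


lemma key_infDist (x : EuclideanSpace ℝ (Fin 2)) (y : ℝ) :
    Metric.infDist x {ξ : EuclideanSpace ℝ (Fin 2) | |ξ 0| - |ξ 1| = y} ≤
      |y - (|x 0| - |x 1|)| := by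
  have h10 : (1 : Fin 2) ≠ 0 := by decide
  rcases le_or_gt 0 (y - (|x 0| - |x 1|)) with h | h
  · obtain ⟨a, habs, hda⟩ : ∃ a : ℝ, |a| = |x 0| + (y - (|x 0| - |x 1|)) ∧
        |x 0 - a| = |y - (|x 0| - |x 1|)| := by
      rcases le_or_gt 0 (x 0) with h0 | h0
      · exact ⟨x 0 + (y - (|x 0| - |x 1|)), by
          rw [abs_of_nonneg (by positivity), abs_of_nonneg h0], by
          rw [abs_of_nonneg h]; ring_nf; rw [abs_of_nonpos (by linarith)]; ring⟩
      · exact ⟨x 0 - (y - (|x 0| - |x 1|)), by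
          rw [abs_of_nonpos (by linarith [abs_nonneg (x 0)] : x 0 - (y - (|x 0| - |x 1|)) ≤ 0),
            abs_of_neg h0]; ring, by
          rw [abs_of_nonneg h]; ring_nf; rw [abs_of_nonneg (by linarith)]⟩
    have hmem : WithLp.toLp 2 (Function.update x 0 a) ∈
        {ξ : EuclideanSpace ℝ (Fin 2) | |ξ 0| - |ξ 1| = y} := by
      show |Function.update x 0 a 0| - |Function.update x 0 a 1| = y
      rw [Function.update_self, Function.update_of_ne h10, habs]
      ring
    have hle : Metric.infDist x {ξ : EuclideanSpace ℝ (Fin 2) | |ξ 0| - |ξ 1| = y} ≤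
        dist x (WithLp.toLp 2 (Function.update x 0 a) : EuclideanSpace ℝ (Fin 2)) :=
      Metric.infDist_le_dist_of_mem hmem
    have hdist : dist x (WithLp.toLp 2 (Function.update x 0 a) : EuclideanSpace ℝ (Fin 2))
        = |y - (|x 0| - |x 1|)| := by
      rw [EuclideanSpace.dist_eq, Fin.sum_univ_two]
      change √(dist (x 0) (Function.update x 0 a 0) ^ 2 + dist (x 1) (Function.update x 0 a 1) ^ 2) = _
      rw [Function.update_self,
        Function.update_of_ne h10]
      simp [Real.dist_eq, hda, Real.sqrt_sq_eq_abs]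
    rw [hdist] at hle
    exact hle
  · obtain ⟨b, habs, hdb⟩ : ∃ b : ℝ, |b| = |x 1| - (y - (|x 0| - |x 1|)) ∧
        |x 1 - b| = |y - (|x 0| - |x 1|)| := by
      rcases le_or_gt 0 (x 1) with h0 | h0
      · exact ⟨x 1 - (y - (|x 0| - |x 1|)), by
          rw [abs_of_nonneg (by linarith), abs_of_nonneg h0], by
          rw [abs_of_neg h]; ring_nf; rw [abs_of_nonpos (by linarith)]; ring⟩
      · exact ⟨x 1 + (y - (|x 0| - |x 1|)), by
          rw [abs_of_nonpos (by linarith), abs_of_neg h0]; ring, by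
          rw [abs_of_neg h]; ring_nf; rw [abs_of_nonneg (by linarith)]⟩
    have hmem : WithLp.toLp 2 (Function.update x 1 b) ∈
        {ξ : EuclideanSpace ℝ (Fin 2) | |ξ 0| - |ξ 1| = y} := by
      show |Function.update x 1 b 0| - |Function.update x 1 b 1| = y
      rw [Function.update_self, Function.update_of_ne h10.symm, habs]
      ring
    have hle : Metric.infDist x {ξ : EuclideanSpace ℝ (Fin 2) | |ξ 0| - |ξ 1| = y} ≤
        dist x (WithLp.toLp 2 (Function.update x 1 b) : EuclideanSpace ℝ (Fin 2)) :=
      Metric.infDist_le_dist_of_mem hmem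
    have hdist : dist x (WithLp.toLp 2 (Function.update x 1 b) : EuclideanSpace ℝ (Fin 2))
        = |y - (|x 0| - |x 1|)| := by
      rw [EuclideanSpace.dist_eq, Fin.sum_univ_two]
      change √(dist (x 0) (Function.update x 1 b 0) ^ 2 + dist (x 1) (Function.update x 1 b 1) ^ 2) = _
      rw [Function.update_self,
        Function.update_of_ne h10.symm]
      simp [Real.dist_eq, hdb, Real.sqrt_sq_eq_abs]
    rw [hdist] at hle
    exact hle

/-- the function `F(x₁,x₂) = |x₁| − |x₂|` on the Euclidean plane is metrically
regular near `((0,0), 0)`; more precisely, for every `K > 1` there is `r > 0` such that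
`d(x, F⁻¹(y)) ≤ K·|y − F(x)|` for all `‖x‖ ≤ r` and `|y| ≤ r`. -/
theorem abs_sub_abs_metrically_regular :
    (∀ K : ℝ, 1 < K → ∃ r > (0 : ℝ),
      ∀ x : EuclideanSpace ℝ (Fin 2), ‖x‖ ≤ r → ∀ y : ℝ, |y| ≤ r →
        Metric.infDist x {ξ : EuclideanSpace ℝ (Fin 2) | |ξ 0| - |ξ 1| = y} ≤
          K * |y - (|x 0| - |x 1|)|) ∧
    (∃ K > (0 : ℝ), ∃ r > (0 : ℝ),
      ∀ x : EuclideanSpace ℝ (Fin 2), ‖x - 0‖ ≤ r →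
        ∀ y : ℝ, |y - (|(0 : EuclideanSpace ℝ (Fin 2)) 0| -
            |(0 : EuclideanSpace ℝ (Fin 2)) 1|)| ≤ r →
        Metric.infDist x {ξ : EuclideanSpace ℝ (Fin 2) | |ξ 0| - |ξ 1| = y} ≤
          K * |y - (|x 0| - |x 1|)|) := by
  constructor
  · intro K hK
    refine ⟨1, one_pos, fun x _ y _ => ?_⟩
    calc Metric.infDist x {ξ : EuclideanSpace ℝ (Fin 2) | |ξ 0| - |ξ 1| = y}
        ≤ |y - (|x 0| - |x 1|)| := key_infDist x y
      _ ≤ K * |y - (|x 0| - |x 1|)| := le_mul_of_one_le_left (abs_nonneg _) hK.le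
  · refine ⟨2, two_pos, 1, one_pos, fun x _ y _ => ?_⟩
    calc Metric.infDist x {ξ : EuclideanSpace ℝ (Fin 2) | |ξ 0| - |ξ 1| = y}
        ≤ |y - (|x 0| - |x 1|)| := key_infDist x y
      _ ≤ 2 * |y - (|x 0| - |x 1|)| := by nlinarith [abs_nonneg (y - (|x 0| - |x 1|))]
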